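/- Let {a_n} be a sequence of points of B \ B₀ (points with positive second coordinate) converging to (0,0) in the Euclidean topology on ℚ×ℚ. Then the set A = {(0,0)} ∪ {a_n : n ∈ ℕ} is θ-closed and discrete in the Bing space B, but A is not θ-discrete: the closure (in B) of any Bing-neighborhood of (0,0) contains all but finitely many points of A. -/

import Mathlib

/-- A point of the Bing space: a rational pair `(x, y)` with `0 ≤ y`. -/
structure BingPt where
  x : ℚ
  y : ℚ
  hy : 0 ≤ y

/-- The pair of base "intervals" attached to the point `(a,b)`:
rational points `(x,0)` with `|x - (a - b/√3)| < ε` or `|x - (a + b/√3)| < ε`. -/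
def wedge (a b : ℚ) (ε : ℝ) : Set BingPt :=
  {z : BingPt | z.y = 0 ∧ (|(z.x : ℝ) - ((a : ℝ) - (b : ℝ) / Real.sqrt 3)| < ε ∨
    |(z.x : ℝ) - ((a : ℝ) + (b : ℝ) / Real.sqrt 3)| < ε)}

/-- A set `U` is Bing-open if each of its points `(a,b)` admits `ε > 0`
with the corresponding base intervals contained in `U`. -/
def BingOpen (U : Set BingPt) : Prop :=
  ∀ z ∈ U, ∃ ε : ℝ, 0 < ε ∧ wedge z.x z.y ε ⊆ U

/-- The Bing topology. -/
instance : TopologicalSpace BingPt where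
  IsOpen := BingOpen
  isOpen_univ := fun _ _ => ⟨1, one_pos, fun _ _ => trivial⟩
  isOpen_inter := by
    intro U V hU hV z hz
    obtain ⟨ε1, hε1, h1⟩ := hU z hz.1
    obtain ⟨ε2, hε2, h2⟩ := hV z hz.2
    refine ⟨min ε1 ε2, lt_min hε1 hε2, fun w hw => ⟨h1 ⟨hw.1, ?_⟩, h2 ⟨hw.1, ?_⟩⟩⟩
    · exact hw.2.imp (fun h => h.trans_le (min_le_left _ _)) (fun h => h.trans_le (min_le_left _ _))
    · exact hw.2.imp (fun h => h.trans_le (min_le_right _ _)) (fun h => h.trans_le (min_le_right _ _))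
  isOpen_sUnion := by
    intro S hS z hz
    obtain ⟨U, hU, hzU⟩ := hz
    obtain ⟨ε, hε, h⟩ := hS U hU z hzU
    exact ⟨ε, hε, fun w hw => ⟨U, hU, h hw⟩⟩

/-- `D` is θ-discrete: every point has a neighborhood whose closure meets `D` in ≤ 1 point. -/
def ThetaDiscrete {X : Type*} [TopologicalSpace X] (D : Set X) : Prop :=
  ∀ x : X, ∃ O ∈ nhds x, (closure O ∩ D).Subsingleton

/-- `D` is θ-closed: every point outside `D` has a neighborhood whose closure misses `D`. -/
def ThetaClosed {X : Type*} [TopologicalSpace X] (D : Set X) : Prop :=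
  ∀ x : X, x ∉ D → ∃ O ∈ nhds x, closure O ∩ D = ∅

/-- `D` is discrete (as a subset): every point has a neighborhood meeting `D` in ≤ 1 point. -/
def DiscreteIn {X : Type*} [TopologicalSpace X] (D : Set X) : Prop :=
  ∀ x : X, ∃ O ∈ nhds x, (O ∩ D).Subsingleton

/-- The origin of the Bing space. -/
def origin : BingPt := ⟨0, 0, le_refl 0⟩


open Filter Topology

noncomputable def cmc (p : BingPt) : ℝ := (p.x : ℝ) - (p.y : ℝ) / Real.sqrt 3
noncomputable def cpc (p : BingPt) : ℝ := (p.x : ℝ) + (p.y : ℝ) / Real.sqrt 3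

lemma sqrt3_pos : (0:ℝ) < Real.sqrt 3 := Real.sqrt_pos.mpr (by norm_num)

lemma sqrt3_irr : Irrational (Real.sqrt 3) := by
  rw [show ((3:ℝ) = ((3:ℕ):ℝ)) by norm_num, irrational_sqrt_natCast_iff]
  rintro ⟨r, hr⟩
  have h1 : r ≤ 3 := by nlinarith
  interval_cases r <;> omega

lemma BingPt.ext' {p q : BingPt} (hx : p.x = q.x) (hy : p.y = q.y) : p = q := by
  cases p; cases q; simp_all

lemma rat_shift {u v x₁ x₂ : ℚ} (h : (x₁:ℝ) + (u:ℝ)/Real.sqrt 3 = (x₂:ℝ) + (v:ℝ)/Real.sqrt 3) :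
    u = v ∧ x₁ = x₂ := by
  have h3 := sqrt3_pos
  have key : ((u:ℝ) - v) = ((x₂:ℝ) - x₁) * Real.sqrt 3 := by
    field_simp at h
    linarith
  by_cases hx : x₁ = x₂
  · subst hx
    have h0 : (u:ℝ) - v = 0 := by simpa using key
    have : (u:ℝ) = v := by linarith
    exact ⟨by exact_mod_cast this, rfl⟩
  · exfalso
    have hx' : ((x₂:ℝ) - x₁) ≠ 0 := by
      intro h0
      apply hx
      have : (x₁:ℝ) = x₂ := by linarith
      exact_mod_cast this
    have : Real.sqrt 3 = (((u - v)/(x₂ - x₁) : ℚ) : ℝ) := by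
      push_cast
      field_simp
      linarith [key]
    exact sqrt3_irr ⟨_, this.symm⟩

lemma cmc_eq (p : BingPt) : cmc p = (p.x:ℝ) + ((-p.y : ℚ):ℝ)/Real.sqrt 3 := by
  unfold cmc; push_cast; ring

lemma cpc_eq (p : BingPt) : cpc p = (p.x:ℝ) + ((p.y : ℚ):ℝ)/Real.sqrt 3 := rfl

lemma mem_wedge_iff {p : BingPt} {ε : ℝ} {w : BingPt} :
    w ∈ wedge p.x p.y ε ↔ w.y = 0 ∧ (|(w.x:ℝ) - cmc p| < ε ∨ |(w.x:ℝ) - cpc p| < ε) :=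
  Iff.rfl

lemma cmc_eq_x {p : BingPt} (h : p.y = 0) : cmc p = (p.x:ℝ) := by
  unfold cmc; rw [h]; push_cast; ring

lemma cpc_eq_x {p : BingPt} (h : p.y = 0) : cpc p = (p.x:ℝ) := by
  unfold cpc; rw [h]; push_cast; ring

lemma cmc_origin : cmc origin = 0 := by unfold cmc origin; push_cast; ring
lemma cpc_origin : cpc origin = 0 := by unfold cpc origin; push_cast; ring

/-- `cmc p = cpc q` type equations imply equality of coordinates. -/
lemma center_eq_cases {p q : BingPt} :
    (cmc p = cmc q → -p.y = -q.y ∧ p.x = q.x) ∧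
    (cmc p = cpc q → -p.y = q.y ∧ p.x = q.x) ∧
    (cpc p = cmc q → p.y = -q.y ∧ p.x = q.x) ∧
    (cpc p = cpc q → p.y = q.y ∧ p.x = q.x) := by
  refine ⟨fun h => ?_, fun h => ?_, fun h => ?_, fun h => ?_⟩
  · have := rat_shift (u := -p.y) (v := -q.y) (x₁ := p.x) (x₂ := q.x)
      (by rw [← cmc_eq, ← cmc_eq]; exact h)
    exact ⟨by rw [this.1], this.2⟩
  · have := rat_shift (u := -p.y) (v := q.y) (x₁ := p.x) (x₂ := q.x)
      (by rw [← cmc_eq, ← cpc_eq]; exact h)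
    exact this
  · have := rat_shift (u := p.y) (v := -q.y) (x₁ := p.x) (x₂ := q.x)
      (by rw [← cpc_eq, ← cmc_eq]; exact h)
    exact this
  · have := rat_shift (u := p.y) (v := q.y) (x₁ := p.x) (x₂ := q.x)
      (by rw [← cpc_eq, ← cpc_eq]; exact h)
    exact this

lemma cmc_ne_zero {p : BingPt} (h : p ≠ origin) : cmc p ≠ 0 := by
  intro h0
  have := (center_eq_cases (p := p) (q := origin)).1 (by rw [h0, cmc_origin])
  exact h (BingPt.ext' this.2 (by have := this.1; simpa [origin] using this))

lemma cpc_ne_zero {p : BingPt} (h : p ≠ origin) : cpc p ≠ 0 := by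
  intro h0
  have := (center_eq_cases (p := p) (q := origin)).2.2.2 (by rw [h0, cpc_origin])
  exact h (BingPt.ext' this.2 (by simpa [origin] using this.1))

lemma isOpen_iff_bingOpen (U : Set BingPt) : IsOpen U ↔ BingOpen U := Iff.rfl

lemma open_insert_wedge (p : BingPt) {ε : ℝ} (hε : 0 < ε) :
    IsOpen (insert p (wedge p.x p.y ε)) := by
  rw [isOpen_iff_bingOpen]
  intro z hz
  rcases Set.mem_insert_iff.mp hz with rfl | hz
  · exact ⟨ε, hε, fun w hw => Set.mem_insert_of_mem _ hw⟩
  · obtain ⟨hzy, hzc⟩ := mem_wedge_iff.mp hz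
    rcases hzc with h | h
    · refine ⟨ε - |(z.x:ℝ) - cmc p|, by linarith, fun w hw => Set.mem_insert_of_mem _ ?_⟩
      obtain ⟨hwy, hwc⟩ := mem_wedge_iff.mp hw
      have hwx : |(w.x:ℝ) - (z.x:ℝ)| < ε - |(z.x:ℝ) - cmc p| := by
        rcases hwc with h' | h'
        · rwa [cmc_eq_x hzy] at h'
        · rwa [cpc_eq_x hzy] at h'
      refine mem_wedge_iff.mpr ⟨hwy, Or.inl ?_⟩
      calc |(w.x:ℝ) - cmc p| ≤ |(w.x:ℝ) - z.x| + |(z.x:ℝ) - cmc p| := abs_sub_le _ _ _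
        _ < ε := by linarith
    · refine ⟨ε - |(z.x:ℝ) - cpc p|, by linarith, fun w hw => Set.mem_insert_of_mem _ ?_⟩
      obtain ⟨hwy, hwc⟩ := mem_wedge_iff.mp hw
      have hwx : |(w.x:ℝ) - (z.x:ℝ)| < ε - |(z.x:ℝ) - cpc p| := by
        rcases hwc with h' | h'
        · rwa [cmc_eq_x hzy] at h'
        · rwa [cpc_eq_x hzy] at h'
      refine mem_wedge_iff.mpr ⟨hwy, Or.inr ?_⟩
      calc |(w.x:ℝ) - cpc p| ≤ |(w.x:ℝ) - z.x| + |(z.x:ℝ) - cpc p| := abs_sub_le _ _ _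
        _ < ε := by linarith

lemma insert_wedge_mem_nhds (p : BingPt) {ε : ℝ} (hε : 0 < ε) :
    insert p (wedge p.x p.y ε) ∈ nhds p :=
  (open_insert_wedge p hε).mem_nhds (Set.mem_insert _ _)

lemma exists_wedge_of_mem_nhds {p : BingPt} {U : Set BingPt} (hU : U ∈ nhds p) :
    ∃ ε : ℝ, 0 < ε ∧ wedge p.x p.y ε ⊆ U := by
  obtain ⟨V, hVU, hV, hpV⟩ := mem_nhds_iff.mp hU
  obtain ⟨ε, hε, h⟩ := (isOpen_iff_bingOpen V).mp hV p hpV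
  exact ⟨ε, hε, h.trans hVU⟩

lemma not_mem_closure_of_wedge_disj {p : BingPt} {O : Set BingPt} {δ : ℝ} (hδ : 0 < δ)
    (hdisj : (insert p (wedge p.x p.y δ)) ∩ O = ∅) : p ∉ closure O := by
  intro hcl
  have := mem_closure_iff.mp hcl _ (open_insert_wedge p hδ) (Set.mem_insert _ _)
  rw [hdisj] at this
  exact Set.not_nonempty_empty this

/-- Master lemma: a point far (in center distance) from `q` is not in the closure of the
basic neighborhood of `q`. -/
lemma not_mem_closure_insert_wedge {p q : BingPt} {ε : ℝ} (hε : 0 < ε) (hpq : p ≠ q)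
    (h1 : ε < |cmc p - cmc q|) (h2 : ε < |cmc p - cpc q|)
    (h3 : ε < |cpc p - cmc q|) (h4 : ε < |cpc p - cpc q|) :
    p ∉ closure (insert q (wedge q.x q.y ε)) := by
  set m := min (min |cmc p - cmc q| |cmc p - cpc q|) (min |cpc p - cmc q| |cpc p - cpc q|) with hm
  have hmle1 : m ≤ |cmc p - cmc q| := le_trans (min_le_left _ _) (min_le_left _ _)
  have hmle2 : m ≤ |cmc p - cpc q| := le_trans (min_le_left _ _) (min_le_right _ _)
  have hmle3 : m ≤ |cpc p - cmc q| := le_trans (min_le_right _ _) (min_le_left _ _)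
  have hmle4 : m ≤ |cpc p - cpc q| := le_trans (min_le_right _ _) (min_le_right _ _)
  have hεm : ε < m := by
    simp only [hm, lt_min_iff]
    exact ⟨⟨h1, h2⟩, ⟨h3, h4⟩⟩
  apply not_mem_closure_of_wedge_disj (δ := m - ε) (by linarith)
  rw [Set.eq_empty_iff_forall_notMem]
  rintro w ⟨hw1, hw2⟩
  have key : ∀ X : ℝ, (|X - cmc p| < m - ε ∨ |X - cpc p| < m - ε) →
      (|X - cmc q| < ε ∨ |X - cpc q| < ε) → False := by
    intro X hA hB
    rcases hA with hA | hA <;> rcases hB with hB | hB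
    · have h := abs_sub_le (cmc p) X (cmc q)
      rw [abs_sub_comm (cmc p) X] at h; linarith
    · have h := abs_sub_le (cmc p) X (cpc q)
      rw [abs_sub_comm (cmc p) X] at h; linarith
    · have h := abs_sub_le (cpc p) X (cmc q)
      rw [abs_sub_comm (cpc p) X] at h; linarith
    · have h := abs_sub_le (cpc p) X (cpc q)
      rw [abs_sub_comm (cpc p) X] at h; linarith
  rcases Set.mem_insert_iff.mp hw1 with rfl | hw1 <;>
    rcases Set.mem_insert_iff.mp hw2 with hq | hw2
  · exact hpq hq
  · obtain ⟨hy0, hc⟩ := mem_wedge_iff.mp hw2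
    refine key (w.x:ℝ) (Or.inl ?_) hc
    rw [cmc_eq_x hy0]
    simp only [sub_self, abs_zero]
    linarith
  · subst hq
    obtain ⟨hy0, hc⟩ := mem_wedge_iff.mp hw1
    refine key (w.x:ℝ) hc (Or.inl ?_)
    rw [cmc_eq_x hy0]
    simp only [sub_self, abs_zero]
    linarith
  · exact key (w.x:ℝ) (mem_wedge_iff.mp hw1).2 (mem_wedge_iff.mp hw2).2

/-- A point whose left center lies strictly within the `ε`-interval at the origin is in the
closure of any set containing that interval. -/
lemma mem_closure_of_center {p : BingPt} {O : Set BingPt} {ε : ℝ}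
    (hsub : wedge origin.x origin.y ε ⊆ O) (hc : |cmc p| < ε) : p ∈ closure O := by
  rw [mem_closure_iff]
  intro o ho hpo
  obtain ⟨δ, hδ, hw⟩ := (isOpen_iff_bingOpen o).mp ho p hpo
  have habs := abs_lt.mp hc
  have hlt : max (-ε) (cmc p - δ) < min ε (cmc p + δ) := by
    simp only [max_lt_iff, lt_min_iff]
    refine ⟨⟨by linarith, by linarith⟩, ⟨by linarith, by linarith⟩⟩
  obtain ⟨q, hq1, hq2⟩ := exists_rat_btwn hlt
  have hA : -ε < (q:ℝ) := lt_of_le_of_lt (le_max_left _ _) hq1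
  have hB : cmc p - δ < (q:ℝ) := lt_of_le_of_lt (le_max_right _ _) hq1
  have hC : (q:ℝ) < ε := lt_of_lt_of_le hq2 (min_le_left _ _)
  have hD : (q:ℝ) < cmc p + δ := lt_of_lt_of_le hq2 (min_le_right _ _)
  refine ⟨⟨q, 0, le_refl 0⟩, ?_, hsub ?_⟩
  · exact hw (mem_wedge_iff.mpr ⟨rfl, Or.inl (abs_lt.mpr ⟨by linarith, by linarith⟩)⟩)
  · refine mem_wedge_iff.mpr ⟨rfl, Or.inl ?_⟩
    rw [cmc_origin, sub_zero]
    exact abs_lt.mpr ⟨by linarith, by linarith⟩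

theorem sep_lemma {f : ℕ → ℝ} {c : ℝ} (hf : Filter.Tendsto f Filter.atTop (nhds 0)) (hc : c ≠ 0)
    (h : ∀ n, f n ≠ c) : ∃ δ : ℝ, 0 < δ ∧ ∀ n, δ ≤ |f n - c| := by
  have h2 : ∀ᶠ n in Filter.atTop, |f n| < |c|/2 := by
    have habs : Filter.Tendsto (fun n => |f n|) Filter.atTop (nhds 0) := by
      simpa using hf.abs
    exact habs.eventually_lt_const (by positivity)
  obtain ⟨N, hN⟩ := Filter.eventually_atTop.mp h2
  classical
  set S : Finset ℝ := insert (|c|/2) ((Finset.range N).image fun n => |f n - c|) with hS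
  have hSne : S.Nonempty := ⟨_, Finset.mem_insert_self _ _⟩
  refine ⟨S.min' hSne, ?_, ?_⟩
  · rw [Finset.lt_min'_iff]
    intro b hb
    rcases Finset.mem_insert.mp hb with rfl | hb
    · positivity
    · obtain ⟨n, _, rfl⟩ := Finset.mem_image.mp hb
      exact abs_sub_pos.mpr (h n)
  · intro n
    by_cases hn : n < N
    · exact S.min'_le _ (Finset.mem_insert_of_mem (Finset.mem_image.mpr ⟨n, Finset.mem_range.mpr hn, rfl⟩))
    · have hfn := hN n (not_lt.mp hn)
      have : |c|/2 ≤ |f n - c| := by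
        have := abs_sub_abs_le_abs_sub c (f n)
        rw [abs_sub_comm] at this
        linarith [abs_sub_abs_le_abs_sub c (f n), abs_sub_comm c (f n)]
      exact le_trans (S.min'_le _ (Finset.mem_insert_self _ _)) this


/-- If `a n` are points with positive second coordinate converging to `(0,0)` in the
Euclidean topology of `ℚ × ℚ`, then `A = {(0,0)} ∪ {a n}` is θ-closed and discrete in the
Bing space, but not θ-discrete: the closure of every Bing-neighborhood of the origin
contains all but finitely many of the points `a n`. -/
theorem bing_thetaClosed_discrete_not_thetaDiscrete (a : ℕ → BingPt)
    (hpos : ∀ n, 0 < (a n).y)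
    (hconv : Filter.Tendsto (fun n => ((a n).x, (a n).y)) Filter.atTop (nhds ((0 : ℚ), (0 : ℚ)))) :
    ThetaClosed ({origin} ∪ Set.range a) ∧ DiscreteIn ({origin} ∪ Set.range a) ∧
    ¬ ThetaDiscrete ({origin} ∪ Set.range a) ∧
    ∀ O ∈ nhds origin, {n : ℕ | a n ∉ closure O}.Finite := by
  classical
  set A := ({origin} ∪ Set.range a : Set BingPt) with hA
  have hxQ : Filter.Tendsto (fun n => (a n).x) Filter.atTop (nhds (0:ℚ)) := by
    simpa [Function.comp_def] using (continuous_fst.tendsto ((0:ℚ),(0:ℚ))).comp hconv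
  have hyQ : Filter.Tendsto (fun n => (a n).y) Filter.atTop (nhds (0:ℚ)) := by
    simpa [Function.comp_def] using (continuous_snd.tendsto ((0:ℚ),(0:ℚ))).comp hconv
  have hxR : Filter.Tendsto (fun n => ((a n).x : ℝ)) Filter.atTop (nhds 0) := by
    simpa [Function.comp_def] using (Rat.continuous_coe_real.tendsto (0:ℚ)).comp hxQ
  have hyR : Filter.Tendsto (fun n => ((a n).y : ℝ)) Filter.atTop (nhds 0) := by
    simpa [Function.comp_def] using (Rat.continuous_coe_real.tendsto (0:ℚ)).comp hyQ
  have hdm : Filter.Tendsto (fun n => cmc (a n)) Filter.atTop (nhds 0) := by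
    have := hxR.sub (hyR.div_const (Real.sqrt 3))
    simpa [cmc] using this
  have hdp : Filter.Tendsto (fun n => cpc (a n)) Filter.atTop (nhds 0) := by
    have := hxR.add (hyR.div_const (Real.sqrt 3))
    simpa [cpc] using this
  -- Part 4
  have part4 : ∀ O ∈ nhds origin, {n : ℕ | a n ∉ closure O}.Finite := by
    intro O hO
    obtain ⟨ε, hε, hsub⟩ := exists_wedge_of_mem_nhds hO
    have hev : ∀ᶠ n in Filter.atTop, |cmc (a n)| < ε := by
      have habs : Filter.Tendsto (fun n => |cmc (a n)|) Filter.atTop (nhds 0) := by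
        simpa using hdm.abs
      exact habs.eventually_lt_const hε
    obtain ⟨N, hN⟩ := Filter.eventually_atTop.mp hev
    apply Set.Finite.subset (Set.finite_Iio N)
    intro n hn
    by_contra hnN
    exact hn (mem_closure_of_center hsub (hN n (not_lt.mp hnN)))
  -- Part 3
  have part3 : ¬ ThetaDiscrete A := by
    intro h
    obtain ⟨O, hO, hsub⟩ := h origin
    have hfin := part4 O hO
    have hev1 : ∀ᶠ n in Filter.atTop, a n ∈ closure O := by
      rw [← Nat.cofinite_eq_atTop]
      exact Filter.eventually_cofinite.mpr hfin
    obtain ⟨n₁, hn₁⟩ := hev1.exists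
    have hev2 : ∀ᶠ n in Filter.atTop, (a n).y < (a n₁).y := hyQ.eventually_lt_const (hpos n₁)
    obtain ⟨n₂, hn₂, hlt⟩ := (hev1.and hev2).exists
    have heq : a n₂ = a n₁ :=
      hsub ⟨hn₂, (Set.mem_union _ _ _).mpr (Or.inr ⟨n₂, rfl⟩)⟩
        ⟨hn₁, (Set.mem_union _ _ _).mpr (Or.inr ⟨n₁, rfl⟩)⟩
    rw [heq] at hlt
    exact lt_irrefl _ hlt
  -- Part 2
  have part2 : DiscreteIn A := by
    intro z
    by_cases hzo : z = origin
    · subst hzo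
      refine ⟨_, insert_wedge_mem_nhds origin one_pos, (Set.subsingleton_singleton (a := origin)).anti ?_⟩
      rintro u ⟨hu1, hu2⟩
      rcases Set.mem_insert_iff.mp hu1 with rfl | hu1
      · rfl
      · rcases (Set.mem_union _ _ _).mp hu2 with h | ⟨n, rfl⟩
        · exact h
        · exact absurd (mem_wedge_iff.mp hu1).1 (ne_of_gt (hpos n))
    · have hcm := cmc_ne_zero hzo
      have hcp := cpc_ne_zero hzo
      have hδ : 0 < min |cmc z| |cpc z| := lt_min (abs_pos.mpr hcm) (abs_pos.mpr hcp)
      refine ⟨_, insert_wedge_mem_nhds z hδ, (Set.subsingleton_singleton (a := z)).anti ?_⟩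
      rintro u ⟨hu1, hu2⟩
      rcases Set.mem_insert_iff.mp hu1 with rfl | hu1
      · rfl
      · exfalso
        rcases (Set.mem_union _ _ _).mp hu2 with h | ⟨n, rfl⟩
        · have hu : u = origin := Set.mem_singleton_iff.mp h
          subst hu
          obtain ⟨_, hc⟩ := mem_wedge_iff.mp hu1
          have hx0 : ((origin.x : ℚ) : ℝ) = 0 := by norm_num [origin]
          rcases hc with h' | h'
          · rw [hx0, zero_sub, abs_neg] at h'
            exact absurd h' (not_lt.mpr (min_le_left _ _))
          · rw [hx0, zero_sub, abs_neg] at h'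
            exact absurd h' (not_lt.mpr (min_le_right _ _))
        · exact absurd (mem_wedge_iff.mp hu1).1 (ne_of_gt (hpos n))
  -- Part 1
  have part1 : ThetaClosed A := by
    intro z hz
    have hzo : z ≠ origin := fun h => hz ((Set.mem_union _ _ _).mpr (Or.inl (Set.mem_singleton_iff.mpr h)))
    have hza : ∀ n, a n ≠ z := fun n h => hz ((Set.mem_union _ _ _).mpr (Or.inr ⟨n, h⟩))
    have hcm0 := cmc_ne_zero hzo
    have hcp0 := cpc_ne_zero hzo
    have hne1 : ∀ n, cmc (a n) ≠ cmc z := by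
      intro n h
      obtain ⟨h1, h2⟩ := (center_eq_cases (p := a n) (q := z)).1 h
      exact hza n (BingPt.ext' h2 (neg_inj.mp h1))
    have hne2 : ∀ n, cmc (a n) ≠ cpc z := by
      intro n h
      obtain ⟨h1, h2⟩ := (center_eq_cases (p := a n) (q := z)).2.1 h
      have := hpos n
      have := z.hy
      have : -(a n).y < (0:ℚ) := by linarith
      rw [h1] at this
      linarith [z.hy]
    have hne3 : ∀ n, cpc (a n) ≠ cmc z := by
      intro n h
      obtain ⟨h1, h2⟩ := (center_eq_cases (p := a n) (q := z)).2.2.1 h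
      have h3 := hpos n
      have h4 := z.hy
      rw [h1] at h3
      linarith
    have hne4 : ∀ n, cpc (a n) ≠ cpc z := by
      intro n h
      obtain ⟨h1, h2⟩ := (center_eq_cases (p := a n) (q := z)).2.2.2 h
      exact hza n (BingPt.ext' h2 h1)
    obtain ⟨δ₁, hδ₁, hb₁⟩ := sep_lemma hdm hcm0 hne1
    obtain ⟨δ₂, hδ₂, hb₂⟩ := sep_lemma hdm hcp0 hne2
    obtain ⟨δ₃, hδ₃, hb₃⟩ := sep_lemma hdp hcm0 hne3
    obtain ⟨δ₄, hδ₄, hb₄⟩ := sep_lemma hdp hcp0 hne4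
    set M := min (min (min δ₁ δ₂) (min δ₃ δ₄)) (min |cmc z| |cpc z|) with hMdef
    have hM : 0 < M := lt_min (lt_min (lt_min hδ₁ hδ₂) (lt_min hδ₃ hδ₄))
      (lt_min (abs_pos.mpr hcm0) (abs_pos.mpr hcp0))
    set δ := M / 2 with hδdef
    have hδpos : 0 < δ := by positivity
    have hδM : δ < M := by rw [hδdef]; linarith
    have hM1 : M ≤ δ₁ := le_trans (min_le_left _ _) (le_trans (min_le_left _ _) (min_le_left _ _))
    have hM2 : M ≤ δ₂ := le_trans (min_le_left _ _) (le_trans (min_le_left _ _) (min_le_right _ _))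
    have hM3 : M ≤ δ₃ := le_trans (min_le_left _ _) (le_trans (min_le_right _ _) (min_le_left _ _))
    have hM4 : M ≤ δ₄ := le_trans (min_le_left _ _) (le_trans (min_le_right _ _) (min_le_right _ _))
    have hMc1 : M ≤ |cmc z| := le_trans (min_le_right _ _) (min_le_left _ _)
    have hMc2 : M ≤ |cpc z| := le_trans (min_le_right _ _) (min_le_right _ _)
    refine ⟨_, insert_wedge_mem_nhds z hδpos, ?_⟩
    rw [Set.eq_empty_iff_forall_notMem]
    rintro u ⟨hu1, hu2⟩
    rcases (Set.mem_union _ _ _).mp hu2 with h | ⟨n, rfl⟩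
    · have hu : u = origin := Set.mem_singleton_iff.mp h
      subst hu
      refine not_mem_closure_insert_wedge hδpos (fun h' => hzo h'.symm) ?_ ?_ ?_ ?_ hu1
      · rw [cmc_origin, zero_sub, abs_neg]; linarith
      · rw [cmc_origin, zero_sub, abs_neg]; linarith
      · rw [cpc_origin, zero_sub, abs_neg]; linarith
      · rw [cpc_origin, zero_sub, abs_neg]; linarith
    · refine not_mem_closure_insert_wedge hδpos (hza n) ?_ ?_ ?_ ?_ hu1
      · exact lt_of_lt_of_le (lt_of_lt_of_le hδM hM1) (hb₁ n)
      · exact lt_of_lt_of_le (lt_of_lt_of_le hδM hM2) (hb₂ n)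
      · exact lt_of_lt_of_le (lt_of_lt_of_le hδM hM3) (hb₃ n)
      · exact lt_of_lt_of_le (lt_of_lt_of_le hδM hM4) (hb₄ n)
  exact ⟨part1, part2, part3, part4⟩
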